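/- Under the stated assumptions on A_per and A_0, the corrector problem -div[A_per(p + ∇w_p)] = 0 with w_p Z^d-periodic is equivalent to the Lippmann–Schwinger equation: τ_p ∈ V_0 satisfies (A_per - A_0)^{-1}τ_p + Γ_0 * τ_p = p a.e. on Q_0 and τ_p = 0 on Q \ Q_0, via the correspondence τ_p = (A_per - A_0)(p + ∇w_p). -/

import Mathlib

open MeasureTheory Complex
open scoped BigOperators ComplexConjugate Real Classical

noncomputable section

instance : Fact ((0:ℝ) < 1) := ⟨one_pos⟩

/-- The `d`-dimensional unit torus `ℝ^d / ℤ^d`. -/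
abbrev Torus (d : ℕ) := Fin d → AddCircle (1 : ℝ)

variable {d : ℕ}

/-- The Fourier character `x ↦ exp(2iπ kᵀx)` on the torus. -/
noncomputable def tChar (k : Fin d → ℤ) (x : Torus d) : ℂ := ∏ i, fourier (k i) (x i)

/-- Fourier coefficient of a periodic vector field. -/
noncomputable def vCoeff (τ : Torus d → Fin d → ℝ) (k : Fin d → ℤ) : Fin d → ℂ :=
  fun j => ∫ x : Torus d, (τ x j : ℂ) * conj (tChar k x)

/-- Fourier multiplier `Γ̂₀(k)` of the second-rank Green operator of `A0`. -/
noncomputable def greenHat (A0 : Matrix (Fin d) (Fin d) ℝ) (k : Fin d → ℤ) :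
    Matrix (Fin d) (Fin d) ℝ :=
  if k = 0 then 0 else
    (∑ i, ∑ j, (k i : ℝ) * A0 i j * (k j : ℝ))⁻¹ •
      Matrix.of (fun i j => (k i : ℝ) * (k j : ℝ))

/-- `g = Γ₀ ∗ τ`, expressed through Fourier coefficients. -/
def IsGreenConv (A0 : Matrix (Fin d) (Fin d) ℝ) (τ g : Torus d → Fin d → ℝ) : Prop :=
  ∀ k j, vCoeff g k j = ∑ l, (greenHat A0 k j l : ℂ) * vCoeff τ k l

/-- `g` is the gradient of a `ℤ^d`-periodic (`H¹`) function. -/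
def IsGradientField (g : Torus d → Fin d → ℝ) : Prop :=
  ∀ k, ∃ c : ℂ, ∀ j, vCoeff g k j = c * (k j : ℂ)

/-- Weak form of `-div F = 0` for a periodic vector field `F`. -/
def IsWeakDivFree (F : Torus d → Fin d → ℝ) : Prop :=
  ∀ k, ∑ j, (k j : ℂ) * vCoeff F k j = 0

/-- `τ` vanishes a.e. outside `Q0`. -/
def ZeroOff (Q0 : Set (Torus d)) (τ : Torus d → Fin d → ℝ) : Prop :=
  ∀ᵐ x : Torus d, x ∉ Q0 → τ x = 0

/-- The Lippmann–Schwinger bilinear form `a(τ,ϖ)`, where `G = Γ₀ ∗ τ` is given. -/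
noncomputable def aForm (Aper : Torus d → Matrix (Fin d) (Fin d) ℝ)
    (A0 : Matrix (Fin d) (Fin d) ℝ) (Q0 : Set (Torus d))
    (τ G ϖ : Torus d → Fin d → ℝ) : ℝ :=
  (∫ x in Q0, ∑ i, ϖ x i * ((Aper x - A0)⁻¹.mulVec (τ x)) i) +
    ∫ x in Q0, ∑ i, ϖ x i * G x i

/-- `L²(S)` norm of a vector field. -/
noncomputable def l2normOn (S : Set (Torus d)) (τ : Torus d → Fin d → ℝ) : ℝ :=
  Real.sqrt (∫ x in S, ∑ i, (τ x i) ^ 2)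

/-! ### Auxiliary lemmas -/

instance : IsProbabilityMeasure (volume : Measure (AddCircle (1:ℝ))) :=
  ⟨by rw [AddCircle.measure_univ]; norm_num⟩

lemma integral_fourier_ne (n : ℤ) (hn : n ≠ 0) :
    ∫ x : AddCircle (1:ℝ), (fourier n x : ℂ) = 0 :=
  integral_eq_zero_of_add_right_eq_neg (fourier_add_half_inv_index hn one_pos)

lemma norm_tChar (k : Fin d → ℤ) (x : Torus d) : ‖tChar k x‖ = 1 := by
  simp [tChar, norm_prod, Circle.norm_coe]

lemma continuous_tChar (k : Fin d → ℤ) : Continuous (tChar k) :=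
  continuous_finset_prod _ fun i _ => (map_continuous (fourier (k i))).comp (continuous_apply i)

lemma integral_conj_tChar (k : Fin d → ℤ) (hk : k ≠ 0) :
    ∫ x : Torus d, conj (tChar k x) = 0 := by
  have h1 : ∀ x : Torus d, conj (tChar k x) = ∏ i, fourier (-(k i)) (x i) := by
    intro x
    rw [tChar, map_prod]
    exact Finset.prod_congr rfl fun i _ => (fourier_neg).symm
  simp_rw [h1]
  rw [MeasureTheory.integral_fintype_prod_volume_eq_prod
    (f := fun i (y : AddCircle (1:ℝ)) => (fourier (-(k i)) y : ℂ))]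
  obtain ⟨i0, hi0⟩ : ∃ i, k i ≠ 0 := by
    by_contra h; push_neg at h; exact hk (funext h)
  exact Finset.prod_eq_zero (Finset.mem_univ i0) (integral_fourier_ne _ (neg_ne_zero.mpr hi0))

lemma comp_integrable {τ : Torus d → Fin d → ℝ}
    (h : MemLp τ 2 (volume : Measure (Torus d))) (j : Fin d) :
    Integrable (fun x => τ x j) := by
  have h1 : Integrable τ := h.integrable (by norm_num)
  exact (ContinuousLinearMap.proj (R := ℝ) (φ := fun _ : Fin d => ℝ) j).integrable_comp h1

lemma integrable_mul_char {h : Torus d → ℝ} (hh : Integrable h) (k : Fin d → ℤ) :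
    Integrable (fun x => (h x : ℂ) * conj (tChar k x)) := by
  have h1 : Integrable (fun x => (h x : ℂ)) := hh.ofReal
  have h2 := h1.bdd_mul
    (((continuous_star).comp (continuous_tChar k)).aestronglyMeasurable)
    (c := 1) (ae_of_all _ fun x => by rw [Function.comp_apply, norm_star, norm_tChar])
  simpa [mul_comm] using h2

lemma vCoeff_neg (G : Torus d → Fin d → ℝ) (k : Fin d → ℤ) (j : Fin d) :
    vCoeff (fun x => -G x) k j = -vCoeff G k j := by
  rw [vCoeff, vCoeff, ← integral_neg]
  congr 1; funext x; push_cast [Pi.neg_apply]; ring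

lemma vCoeff_neg' (G : Torus d → Fin d → ℝ) (k : Fin d → ℤ) (j : Fin d) :
    vCoeff (fun x m => -(G x m)) k j = -vCoeff G k j := by
  rw [vCoeff, vCoeff, ← integral_neg]
  congr 1; funext x; push_cast; ring

lemma vCoeff_A0_shift (A : Matrix (Fin d) (Fin d) ℝ) (q : Fin d → ℝ)
    (f : Torus d → Fin d → ℝ) (hf : ∀ j, Integrable fun x => f x j) (k : Fin d → ℤ)
    (j : Fin d) :
    vCoeff (fun x => A.mulVec (fun m => q m + f x m)) k j
      = ∑ m, (A j m : ℂ) *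
          ((q m : ℂ) * (∫ x : Torus d, conj (tChar k x)) + vCoeff f k m) := by
  have hint : ∀ m : Fin d, Integrable
      (fun x : Torus d => (A j m : ℂ) * (((q m + f x m : ℝ) : ℂ) * conj (tChar k x))) := by
    intro m
    exact (integrable_mul_char ((integrable_const (q m)).add (hf m)) k).const_mul _
  have h1 : vCoeff (fun x => A.mulVec (fun m => q m + f x m)) k j
      = ∫ x : Torus d, ∑ m, (A j m : ℂ) * (((q m + f x m : ℝ) : ℂ) * conj (tChar k x)) := by
    rw [vCoeff]
    congr 1; funext x
    simp only [Matrix.mulVec, dotProduct]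
    push_cast
    rw [Finset.sum_mul]
    exact Finset.sum_congr rfl fun m _ => by ring
  rw [h1, integral_finset_sum _ fun m _ => hint m]
  refine Finset.sum_congr rfl fun m _ => ?_
  rw [integral_const_mul]
  congr 1
  have h2 : ∫ x : Torus d, ((q m + f x m : ℝ) : ℂ) * conj (tChar k x)
      = ∫ x : Torus d, ((q m : ℂ) * conj (tChar k x) + (f x m : ℂ) * conj (tChar k x)) := by
    congr 1; funext x; push_cast; ring
  rw [h2, integral_add (integrable_mul_char (integrable_const (q m)) k)
      (integrable_mul_char (hf m) k), integral_const_mul, vCoeff]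

lemma contrast_inv_mul (M : Matrix (Fin d) (Fin d) ℝ) (c0 : ℝ) (hc0 : 0 < c0)
    (h : ∀ ξ : Fin d → ℝ, c0 * ∑ i, ξ i ^ 2 ≤ |∑ i, ∑ j, ξ i * M i j * ξ j|) :
    M⁻¹ * M = 1 := by
  have hdet : M.det ≠ 0 := by
    intro hdet
    obtain ⟨v, hv, hMv⟩ := (Matrix.exists_mulVec_eq_zero_iff).mpr hdet
    have hquad : ∑ i, ∑ j, v i * M i j * v j = 0 := by
      have h0 : ∀ i, (M.mulVec v) i = 0 := fun i => by rw [hMv]; rfl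
      have heq2 : ∑ i, ∑ j, v i * M i j * v j = ∑ i, v i * (M.mulVec v) i := by
        refine Finset.sum_congr rfl fun i _ => ?_
        simp only [Matrix.mulVec, dotProduct, Finset.mul_sum]
        exact Finset.sum_congr rfl fun j _ => by ring
      simp [heq2, h0]
    have h1 := h v
    rw [hquad, abs_zero] at h1
    have hsum : ∑ i, v i ^ 2 ≤ 0 := by
      by_contra hs
      push_neg at hs
      nlinarith
    obtain ⟨i0, hi0⟩ : ∃ i, v i ≠ 0 := by
      by_contra hvv; push_neg at hvv; exact hv (funext hvv)
    have hpos : (0:ℝ) < ∑ i, v i ^ 2 :=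
      Finset.sum_pos' (fun i _ => sq_nonneg _) ⟨i0, Finset.mem_univ i0, by positivity⟩
    linarith
  exact Matrix.nonsing_inv_mul M (isUnit_iff_ne_zero.mpr hdet)

lemma inv_cancel_mulVec {M : Matrix (Fin d) (Fin d) ℝ} (h : M⁻¹ * M = 1) (v : Fin d → ℝ) :
    M⁻¹.mulVec (M.mulVec v) = v := by
  rw [Matrix.mulVec_mulVec, h, Matrix.one_mulVec]

lemma cast_ne {k : Fin d → ℤ} (hk : k ≠ 0) : (fun i => (k i : ℝ)) ≠ 0 := by
  intro h
  apply hk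
  funext i
  have h2 := congrFun h i
  simp only [Pi.zero_apply] at h2 ⊢
  exact_mod_cast h2

/-- Equivalence between the periodic corrector problem
`-div[A_per(p + ∇w_p)] = 0` and the Lippmann–Schwinger equation
`(A_per - A₀)⁻¹τ_p + Γ₀ ∗ τ_p = p` a.e. on `Q₀`, `τ_p = 0` on `Q \ Q₀`,
via `τ_p = (A_per - A₀)(p + ∇w_p)`. -/
theorem stmt_2 {d : ℕ} (Aper : Torus d → Matrix (Fin d) (Fin d) ℝ)
    (A0 : Matrix (Fin d) (Fin d) ℝ) (Q0 : Set (Torus d)) (hQ0 : MeasurableSet Q0)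
    (hmeas : ∀ i j, Measurable fun x => Aper x i j)
    (hsym : ∀ᵐ x : Torus d, (Aper x).IsSymm) (hA0sym : A0.IsSymm)
    (aco : ℝ) (haco : 0 < aco)
    (hcoer : ∀ᵐ x : Torus d, ∀ ξ : Fin d → ℝ,
      aco * ∑ i, ξ i ^ 2 ≤ ∑ i, ∑ j, ξ i * Aper x i j * ξ j)
    (hbound : ∃ M : ℝ, ∀ᵐ x : Torus d, ∀ i j, |Aper x i j| ≤ M)
    (hA0pos : ∀ ξ : Fin d → ℝ, ξ ≠ 0 → 0 < ∑ i, ∑ j, ξ i * A0 i j * ξ j)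
    (heq : ∀ᵐ x : Torus d, x ∉ Q0 → Aper x = A0)
    (c0 : ℝ) (hc0 : 0 < c0)
    (hcontrast : ∀ᵐ x : Torus d, x ∈ Q0 → ∀ ξ : Fin d → ℝ,
      c0 * ∑ i, ξ i ^ 2 ≤ |∑ i, ∑ j, ξ i * (Aper x i j - A0 i j) * ξ j|)
    (p : Fin d → ℝ) :
    -- (⇒) if `w_p` (with gradient `g`) solves the corrector problem, then
    -- `τ_p = (A_per - A₀)(p + ∇w_p)` solves the Lippmann–Schwinger equation
    (∀ g : Torus d → Fin d → ℝ, MemLp g 2 (volume : Measure (Torus d)) →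
      IsGradientField g →
      IsWeakDivFree (fun x => (Aper x).mulVec fun j => p j + g x j) →
      ZeroOff Q0 (fun x => (Aper x - A0).mulVec fun j => p j + g x j) ∧
        ∃ G : Torus d → Fin d → ℝ,
          IsGreenConv A0 (fun x => (Aper x - A0).mulVec fun j => p j + g x j) G ∧
            ∀ᵐ x : Torus d, x ∈ Q0 →
              (Aper x - A0)⁻¹.mulVec ((Aper x - A0).mulVec fun j => p j + g x j) + G x = p) ∧
    -- (⇐) if `τ_p` solves the Lippmann–Schwinger equation, then `w_p` defined (up to a
    -- constant) by `∇w_p = -Γ₀ ∗ τ_p` solves the corrector problem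
    (∀ τ G : Torus d → Fin d → ℝ, MemLp τ 2 (volume : Measure (Torus d)) →
      MemLp G 2 (volume : Measure (Torus d)) → ZeroOff Q0 τ → IsGreenConv A0 τ G →
      (∀ᵐ x : Torus d, x ∈ Q0 → (Aper x - A0)⁻¹.mulVec (τ x) + G x = p) →
      IsGradientField (fun x => -G x) ∧
        IsWeakDivFree (fun x => (Aper x).mulVec fun j => p j - G x j)) := by
  classical
  obtain ⟨M, hM⟩ := hbound
  -- the quadratic form of `A0` at `k`, as a complex number
  have hSne : ∀ k : Fin d → ℤ, k ≠ 0 →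
      ((∑ i, ∑ j', (k i : ℝ) * A0 i j' * (k j' : ℝ) : ℝ) : ℂ) ≠ 0 := fun k hk =>
    Complex.ofReal_ne_zero.mpr (ne_of_gt (hA0pos _ (cast_ne hk)))
  have hcastS : ∀ k : Fin d → ℤ,
      ((∑ i, ∑ j', (k i : ℝ) * A0 i j' * (k j' : ℝ) : ℝ) : ℂ)
        = ∑ l, ∑ m, (k l : ℂ) * (A0 l m : ℂ) * (k m : ℂ) := by
    intro k; push_cast; ring
  have hGH : ∀ (k : Fin d → ℤ), k ≠ 0 → ∀ j l : Fin d,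
      ((greenHat A0 k j l : ℝ) : ℂ)
        = ((∑ i, ∑ j', (k i : ℝ) * A0 i j' * (k j' : ℝ) : ℝ) : ℂ)⁻¹ * (k j : ℂ) * (k l : ℂ) := by
    intro k hk j l
    rw [greenHat, if_neg hk]
    simp only [Matrix.smul_apply, Matrix.of_apply, smul_eq_mul]
    push_cast
    ring
  have hGsum : ∀ (τ' : Torus d → Fin d → ℝ) (k : Fin d → ℤ), k ≠ 0 → ∀ j : Fin d,
      ∑ l, ((greenHat A0 k j l : ℝ) : ℂ) * vCoeff τ' k l
        = ((∑ i, ∑ j', (k i : ℝ) * A0 i j' * (k j' : ℝ) : ℝ) : ℂ)⁻¹ * (k j : ℂ) *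
            ∑ l, (k l : ℂ) * vCoeff τ' k l := by
    intro τ' k hk j
    rw [Finset.mul_sum]
    refine Finset.sum_congr rfl fun l _ => ?_
    rw [hGH k hk j l]; ring
  have hinvae : ∀ᵐ x : Torus d, x ∈ Q0 → (Aper x - A0)⁻¹ * (Aper x - A0) = 1 := by
    filter_upwards [hcontrast] with x hx hxQ
    exact contrast_inv_mul _ c0 hc0 (fun ξ => by simpa [Matrix.sub_apply] using hx hxQ ξ)
  constructor
  · -- forward direction
    intro g hg2 hgrad hdiv
    have hgj : ∀ j, Integrable (fun x => g x j) := comp_integrable hg2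
    have hpg : ∀ m : Fin d, Integrable (fun x : Torus d => p m + g x m) :=
      fun m => (integrable_const _).add (hgj m)
    have hFj : ∀ l, Integrable
        (fun x => (Aper x).mulVec (fun j => p j + g x j) l) := by
      intro l
      have hrw : (fun x => (Aper x).mulVec (fun j => p j + g x j) l)
          = fun x => ∑ m, Aper x l m * (p m + g x m) := by
        funext x; simp [Matrix.mulVec, dotProduct]
      rw [hrw]
      refine integrable_finset_sum _ fun m _ => ?_
      refine (hpg m).bdd_mul (c := M) ((hmeas l m).aestronglyMeasurable) ?_
      filter_upwards [hM] with x hx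
      simpa [Real.norm_eq_abs] using hx l m
    have hτj : ∀ l, Integrable
        (fun x => (Aper x - A0).mulVec (fun j => p j + g x j) l) := by
      intro l
      have hrw : (fun x => (Aper x - A0).mulVec (fun j => p j + g x j) l)
          = fun x => ∑ m, (Aper x l m - A0 l m) * (p m + g x m) := by
        funext x; simp [Matrix.mulVec, dotProduct, Matrix.sub_apply]
      rw [hrw]
      refine integrable_finset_sum _ fun m _ => ?_
      refine (hpg m).bdd_mul (((hmeas l m).sub measurable_const).aestronglyMeasurable)
        (c := M + |A0 l m|) ?_
      filter_upwards [hM] with x hx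
      have h1 : |Aper x l m - A0 l m| ≤ |Aper x l m| + |A0 l m| := by
        rw [sub_eq_add_neg]
        exact (abs_add_le _ _).trans (le_of_eq (by rw [abs_neg]))
      have h2 := hx l m
      simp only [Real.norm_eq_abs]
      linarith
    have hA0pgj : ∀ l, Integrable
        (fun x => A0.mulVec (fun m => p m + g x m) l) := by
      intro l
      have hrw : (fun x : Torus d => A0.mulVec (fun m => p m + g x m) l)
          = fun x => ∑ m, A0 l m * (p m + g x m) := by
        funext x; simp [Matrix.mulVec, dotProduct]
      rw [hrw]
      exact integrable_finset_sum _ fun m _ => (hpg m).const_mul _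
    have hzero : ZeroOff Q0 (fun x => (Aper x - A0).mulVec fun j => p j + g x j) := by
      filter_upwards [heq] with x hx hxQ
      rw [hx hxQ, sub_self, Matrix.zero_mulVec]
    refine ⟨hzero, fun x => -g x, ?_, ?_⟩
    · -- IsGreenConv
      intro k j
      by_cases hk : k = 0
      · subst hk
        obtain ⟨c, hc⟩ := hgrad 0
        have h0 : vCoeff g 0 j = 0 := by simpa using hc j
        rw [vCoeff_neg, h0, neg_zero]
        simp [greenHat]
      · obtain ⟨c, hc⟩ := hgrad k
        have hI := integral_conj_tChar k hk
        have hτsplit : ∀ l, vCoeff (fun x => (Aper x - A0).mulVec fun j => p j + g x j) k l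
            = vCoeff (fun x => (Aper x).mulVec fun j => p j + g x j) k l
              - vCoeff (fun x => A0.mulVec fun m => p m + g x m) k l := by
          intro l
          simp only [vCoeff]
          rw [← integral_sub (integrable_mul_char (hFj l) k)
            (integrable_mul_char (hA0pgj l) k)]
          congr 1; funext x
          rw [show (Aper x - A0).mulVec (fun j => p j + g x j) l
              = (Aper x).mulVec (fun j => p j + g x j) l
                - A0.mulVec (fun m => p m + g x m) l from by
            simp [Matrix.sub_mulVec]]
          push_cast; ring
        have hA0val : ∀ l, vCoeff (fun x => A0.mulVec fun m => p m + g x m) k l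
            = ∑ m, (A0 l m : ℂ) * (c * (k m : ℂ)) := by
          intro l
          rw [vCoeff_A0_shift A0 p g hgj k l]
          refine Finset.sum_congr rfl fun m _ => ?_
          rw [hI, hc m]; ring
        have hW : ∑ l, (k l : ℂ) *
              vCoeff (fun x => (Aper x - A0).mulVec fun j => p j + g x j) k l
            = -(c * ((∑ i, ∑ j', (k i : ℝ) * A0 i j' * (k j' : ℝ) : ℝ) : ℂ)) := by
          have hstep : ∑ l, (k l : ℂ) *
                vCoeff (fun x => (Aper x - A0).mulVec fun j => p j + g x j) k l
              = (∑ l, (k l : ℂ) * vCoeff (fun x => (Aper x).mulVec fun j => p j + g x j) k l)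
                - ∑ l, (k l : ℂ) * ∑ m, (A0 l m : ℂ) * (c * (k m : ℂ)) := by
            rw [← Finset.sum_sub_distrib]
            refine Finset.sum_congr rfl fun l _ => ?_
            rw [hτsplit l, hA0val l]; ring
          rw [hstep, hdiv k, zero_sub]
          rw [hcastS k]
          congr 1
          rw [Finset.mul_sum]
          refine Finset.sum_congr rfl fun l _ => ?_
          rw [Finset.mul_sum, Finset.mul_sum]
          exact Finset.sum_congr rfl fun m _ => by ring
        rw [vCoeff_neg, hc j, hGsum _ k hk j, hW]
        have hSne' := hSne k hk
        rw [show ((∑ i, ∑ j', (k i : ℝ) * A0 i j' * (k j' : ℝ) : ℝ) : ℂ)⁻¹ * (k j : ℂ) *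
            -(c * ((∑ i, ∑ j', (k i : ℝ) * A0 i j' * (k j' : ℝ) : ℝ) : ℂ))
          = -(c * (k j : ℂ)) * (((∑ i, ∑ j', (k i : ℝ) * A0 i j' * (k j' : ℝ) : ℝ) : ℂ) *
              ((∑ i, ∑ j', (k i : ℝ) * A0 i j' * (k j' : ℝ) : ℝ) : ℂ)⁻¹) from by ring,
          mul_inv_cancel₀ hSne', mul_one]
    · -- a.e. identity on Q0
      filter_upwards [hinvae] with x hx hxQ
      rw [inv_cancel_mulVec (hx hxQ)]
      funext j
      simp
  · -- backward direction
    intro τ G hτ2 hG2 hzero hconv hae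
    have hτj : ∀ j, Integrable (fun x => τ x j) := comp_integrable hτ2
    have hGj : ∀ j, Integrable (fun x => G x j) := comp_integrable hG2
    have hnegGj : ∀ j, Integrable (fun x => -(G x j)) := fun j => (hGj j).neg
    -- the gradient-field property
    refine ⟨?_, ?_⟩
    · intro k
      by_cases hk : k = 0
      · subst hk
        refine ⟨0, fun j => ?_⟩
        rw [vCoeff_neg, hconv 0 j]
        simp [greenHat]
      · refine ⟨-(((∑ i, ∑ j', (k i : ℝ) * A0 i j' * (k j' : ℝ) : ℝ) : ℂ)⁻¹ *
            ∑ l, (k l : ℂ) * vCoeff τ k l), fun j => ?_⟩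
        rw [vCoeff_neg, hconv k j, hGsum τ k hk j]
        ring
    · -- weak div-free
      intro k
      by_cases hk : k = 0
      · subst hk; simp
      · have hSne' := hSne k hk
        have hI := integral_conj_tChar k hk
        have hFae : ∀ᵐ x : Torus d,
            (Aper x).mulVec (fun j => p j - G x j)
              = A0.mulVec (fun m => p m + -(G x m)) + τ x := by
          filter_upwards [heq, hzero, hae, hinvae] with x h1 h2 h3 h4
          by_cases hxQ : x ∈ Q0
          · have hdet : IsUnit (Aper x - A0).det :=
              Matrix.isUnit_det_of_left_inverse (h4 hxQ)
            have hv : (fun j => p j - G x j) = (Aper x - A0)⁻¹.mulVec (τ x) := by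
              funext j
              have h5 := congrFun (h3 hxQ) j
              simp only [Pi.add_apply] at h5
              linarith
            have hcancel : (Aper x - A0).mulVec ((Aper x - A0)⁻¹.mulVec (τ x)) = τ x := by
              rw [Matrix.mulVec_mulVec, Matrix.mul_nonsing_inv _ hdet, Matrix.one_mulVec]
            have hvv : (fun j => p j - G x j) = (fun m => p m + -(G x m)) := by
              funext m; rw [sub_eq_add_neg]
            calc (Aper x).mulVec (fun j => p j - G x j)
                = A0.mulVec (fun j => p j - G x j)
                  + (Aper x - A0).mulVec (fun j => p j - G x j) := by
                  rw [← Matrix.add_mulVec]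
                  rw [show A0 + (Aper x - A0) = Aper x from by abel]
              _ = A0.mulVec (fun m => p m + -(G x m)) + τ x := by
                  rw [hv, hcancel, ← hv, hvv]
          · rw [h1 hxQ, h2 hxQ]
            have : (fun j => p j - G x j) = fun m => p m + -(G x m) := by
              funext m; rw [sub_eq_add_neg]
            rw [this, add_zero]
        have hA0Gj : ∀ l, Integrable
            (fun x => A0.mulVec (fun m => p m + -(G x m)) l) := by
          intro l
          have hrw : (fun x : Torus d => A0.mulVec (fun m => p m + -(G x m)) l)
              = fun x => ∑ m, A0 l m * (p m + -(G x m)) := by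
            funext x; simp [Matrix.mulVec, dotProduct]
          rw [hrw]
          exact integrable_finset_sum _ fun m _ =>
            (((integrable_const _).add (hnegGj m)).const_mul _)
        have hFsplit : ∀ j, vCoeff (fun x => (Aper x).mulVec fun j => p j - G x j) k j
            = vCoeff (fun x => A0.mulVec fun m => p m + -(G x m)) k j
              + vCoeff τ k j := by
          intro j
          simp only [vCoeff]
          rw [← integral_add (integrable_mul_char (hA0Gj j) k)
            (integrable_mul_char (hτj j) k)]
          apply integral_congr_ae
          filter_upwards [hFae] with x hx
          have h5 := congrFun hx j
          simp only [Pi.add_apply] at h5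
          rw [h5]
          push_cast; ring
        have hA0Gval : ∀ j, vCoeff (fun x => A0.mulVec fun m => p m + -(G x m)) k j
            = ∑ m, (A0 j m : ℂ) * (-(vCoeff G k m)) := by
          intro j
          have h5 := vCoeff_A0_shift A0 p (fun x m => -(G x m)) hnegGj k j
          rw [h5]
          refine Finset.sum_congr rfl fun m _ => ?_
          rw [hI, vCoeff_neg' G k m]
          ring
        have hGval : ∀ m, vCoeff G k m
            = ((∑ i, ∑ j', (k i : ℝ) * A0 i j' * (k j' : ℝ) : ℝ) : ℂ)⁻¹ * (k m : ℂ) *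
                ∑ l, (k l : ℂ) * vCoeff τ k l := fun m => by
          rw [hconv k m, hGsum τ k hk m]
        have hB : ∑ j, (k j : ℂ) * ∑ m, (A0 j m : ℂ) * (-(vCoeff G k m))
            = -(((∑ i, ∑ j', (k i : ℝ) * A0 i j' * (k j' : ℝ) : ℝ) : ℂ)⁻¹ *
                (∑ l, (k l : ℂ) * vCoeff τ k l) *
                ((∑ i, ∑ j', (k i : ℝ) * A0 i j' * (k j' : ℝ) : ℝ) : ℂ)) := by
          have h1 : ∑ j, (k j : ℂ) * ∑ m, (A0 j m : ℂ) * (-(vCoeff G k m))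
              = -(((∑ i, ∑ j', (k i : ℝ) * A0 i j' * (k j' : ℝ) : ℝ) : ℂ)⁻¹ *
                  (∑ l, (k l : ℂ) * vCoeff τ k l) *
                  ∑ j, ∑ m, (k j : ℂ) * (A0 j m : ℂ) * (k m : ℂ)) := by
            rw [Finset.mul_sum, ← Finset.sum_neg_distrib]
            refine Finset.sum_congr rfl fun j _ => ?_
            rw [Finset.mul_sum, Finset.mul_sum, ← Finset.sum_neg_distrib]
            refine Finset.sum_congr rfl fun m _ => ?_
            rw [hGval m]; ring
          rw [h1, ← hcastS k]
        calc ∑ j, (k j : ℂ) * vCoeff (fun x => (Aper x).mulVec fun j => p j - G x j) k j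
            = (∑ j, (k j : ℂ) * ∑ m, (A0 j m : ℂ) * (-(vCoeff G k m)))
              + ∑ j, (k j : ℂ) * vCoeff τ k j := by
              rw [← Finset.sum_add_distrib]
              refine Finset.sum_congr rfl fun j _ => ?_
              rw [hFsplit j, hA0Gval j]; ring
          _ = 0 := by
              rw [hB]
              have hcan : ((∑ i, ∑ j', (k i : ℝ) * A0 i j' * (k j' : ℝ) : ℝ) : ℂ)⁻¹ *
                  (∑ l, (k l : ℂ) * vCoeff τ k l) *
                  ((∑ i, ∑ j', (k i : ℝ) * A0 i j' * (k j' : ℝ) : ℝ) : ℂ)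
                  = ∑ l, (k l : ℂ) * vCoeff τ k l := by
                rw [mul_comm, ← mul_assoc, mul_inv_cancel₀ hSne', one_mul]
              rw [hcan, neg_add_cancel]
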